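/- Let C1, C2 ⊆ F4^ℓ be linear codes with minimum Hamming distances d1, d2. The minimum sum-rank distance of SR(C1,C2) is at least min{d1, 2*d2}. -/

import Mathlib

open scoped Classical

noncomputable section

/-- The field with 4 elements. -/
abbrev F4 := GaloisField 2 2

noncomputable instance : Fintype F4 := Fintype.ofFinite _

/-- The `F2`-linear map `x ↦ x1*x + x2*x^2` on `F4`. -/
noncomputable def Lmap (x1 x2 : F4) : F4 →ₗ[ZMod 2] F4 where
  toFun x := x1 * x + x2 * x ^ 2
  map_add' x y := by
    have h : (x + y) ^ 2 = x ^ 2 + y ^ 2 := add_pow_char x y 2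
    rw [h]; ring
  map_smul' c x := by
    have hc : c ^ 2 = c := ZMod.pow_card c
    simp only [Algebra.smul_def, RingHom.id_apply, mul_pow, ← map_pow, hc]
    ring

/-- `F2`-rank of an `F2`-linear endomorphism of `F4`. -/
noncomputable def rk (f : F4 →ₗ[ZMod 2] F4) : ℕ :=
  Module.finrank (ZMod 2) (LinearMap.range f)

/-- Sum-rank weight of `a1*x + a2*x^2`. -/
noncomputable def srWt {ℓ : ℕ} (a1 a2 : Fin ℓ → F4) : ℕ :=
  ∑ i, rk (Lmap (a1 i) (a2 i))


lemma Lmap_apply (x1 x2 x : F4) : Lmap x1 x2 x = x1 * x + x2 * x ^ 2 := rfl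

lemma exists_u : ∃ u : F4, u ≠ 0 ∧ u ≠ 1 := by
  have hcard : Fintype.card F4 = 4 := by simpa using GaloisField.card 2 2 (by norm_num)
  by_contra h
  push_neg at h
  have hsub : (Finset.univ : Finset F4) ⊆ {0, 1} := by
    intro u _
    rcases Classical.em (u = 0) with h0 | h0
    · simp [h0]
    · simp [h u h0]
  have hle := Finset.card_le_card hsub
  have h2 : ({0, 1} : Finset F4).card ≤ 2 := (Finset.card_insert_le _ _).trans (by simp)
  rw [Finset.card_univ, hcard] at hle
  omega

lemma rk_pos (x1 x2 : F4) (h1 : x1 ≠ 0) : 1 ≤ rk (Lmap x1 x2) := by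
  rw [Nat.one_le_iff_ne_zero]
  intro h0
  have hbot : LinearMap.range (Lmap x1 x2) = ⊥ := Submodule.finrank_eq_zero.mp h0
  have hz : ∀ x : F4, Lmap x1 x2 x = 0 := by
    intro x
    have hm : Lmap x1 x2 x ∈ LinearMap.range (Lmap x1 x2) := ⟨x, rfl⟩
    rw [hbot] at hm
    simpa using hm
  have h1' := hz 1
  rw [Lmap_apply] at h1'
  simp only [mul_one, one_pow] at h1'
  have hx2 : x2 = x1 := by
    have hneg : x2 = -x1 := by linear_combination h1'
    rw [hneg, CharTwo.neg_eq]
  obtain ⟨u, hu0, hu1⟩ := exists_u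
  have hu := hz u
  rw [Lmap_apply, hx2] at hu
  have : x1 * (u * (1 + u)) = 0 := by linear_combination hu
  have h1u : (1 : F4) + u ≠ 0 := by
    intro hE
    apply hu1
    have : u = -1 := by linear_combination hE
    rw [this, CharTwo.neg_eq]
  rcases mul_eq_zero.mp this with h | h
  · exact h1 h
  · rcases mul_eq_zero.mp h with h | h
    · exact hu0 h
    · exact h1u h

lemma rk_frob (x2 : F4) (h2 : x2 ≠ 0) : rk (Lmap 0 x2) = 2 := by
  have hinj : Function.Injective (Lmap 0 x2) := by
    intro a b hab
    simp only [Lmap_apply, zero_mul, zero_add] at hab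
    have : a ^ 2 = b ^ 2 := mul_left_cancel₀ h2 hab
    have := sub_eq_zero.mpr this
    have hsq : (a - b) ^ 2 = 0 := by
      rw [sub_sq']
      have hc : (2 : F4) = 0 := by
        have : ((2 : ℕ) : F4) = 0 := CharP.cast_eq_zero F4 2
        simpa using this
      linear_combination this + (b ^ 2 - a * b) * hc
    have : a - b = 0 := pow_eq_zero_iff (by norm_num) |>.mp hsq
    exact sub_eq_zero.mp this
  have := LinearMap.finrank_range_of_inj hinj
  rw [rk, this, GaloisField.finrank 2 (by norm_num)]

lemma rk_ge_one_of_supp {ℓ : ℕ} (a1 a2 : Fin ℓ → F4) :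
    hammingNorm a1 ≤ ∑ i, rk (Lmap (a1 i) (a2 i)) := by
  rw [hammingNorm, Finset.card_eq_sum_ones]
  calc (∑ _i ∈ Finset.univ.filter fun i => a1 i ≠ 0, 1)
      ≤ ∑ i ∈ Finset.univ.filter fun i => a1 i ≠ 0, rk (Lmap (a1 i) (a2 i)) := by
        refine Finset.sum_le_sum fun i hi => ?_
        exact rk_pos _ _ (Finset.mem_filter.mp hi).2
    _ ≤ ∑ i, rk (Lmap (a1 i) (a2 i)) :=
        Finset.sum_le_sum_of_subset (Finset.filter_subset _ _)

theorem stmt7 {ℓ : ℕ} (C1 C2 : Submodule F4 (Fin ℓ → F4))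
    (hC1 : C1 ≠ ⊥) (hC2 : C2 ≠ ⊥) (d1 d2 dsr : ℕ)
    (hd1 : IsLeast {w | ∃ c ∈ C1, c ≠ 0 ∧ hammingNorm c = w} d1)
    (hd2 : IsLeast {w | ∃ c ∈ C2, c ≠ 0 ∧ hammingNorm c = w} d2)
    (hdsr : IsLeast {w | ∃ a1 ∈ C1, ∃ a2 ∈ C2, (a1, a2) ≠ (0, 0) ∧ srWt a1 a2 = w} dsr) :
    min d1 (2 * d2) ≤ dsr := by
  obtain ⟨a1, ha1, a2, ha2, hne, hw⟩ := hdsr.1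
  rw [← hw]
  rcases eq_or_ne a1 0 with h1 | h1
  · have h2 : a2 ≠ 0 := by
      intro h
      exact hne (by rw [h1, h])
    have hd : d2 ≤ hammingNorm a2 := hd2.2 ⟨a2, ha2, h2, rfl⟩
    have key : 2 * hammingNorm a2 ≤ srWt a1 a2 := by
      rw [srWt, hammingNorm, Finset.card_eq_sum_ones, Finset.mul_sum]
      calc (∑ _i ∈ Finset.univ.filter fun i => a2 i ≠ 0, 2 * 1)
          ≤ ∑ i ∈ Finset.univ.filter fun i => a2 i ≠ 0, rk (Lmap (a1 i) (a2 i)) := by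
            refine Finset.sum_le_sum fun i hi => ?_
            rw [h1]
            simp only [Pi.zero_apply]
            rw [rk_frob _ (Finset.mem_filter.mp hi).2]
        _ ≤ ∑ i, rk (Lmap (a1 i) (a2 i)) :=
            Finset.sum_le_sum_of_subset (Finset.filter_subset _ _)
    calc min d1 (2 * d2) ≤ 2 * d2 := min_le_right _ _
      _ ≤ 2 * hammingNorm a2 := by omega
      _ ≤ srWt a1 a2 := key
  · have hd : d1 ≤ hammingNorm a1 := hd1.2 ⟨a1, ha1, h1, rfl⟩
    calc min d1 (2 * d2) ≤ d1 := min_le_left _ _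
      _ ≤ hammingNorm a1 := hd
      _ ≤ srWt a1 a2 := rk_ge_one_of_supp a1 a2
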